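/- Let a < b be reals, let p, q be exponents with 1 ≤ p < q < ∞, let c ≥ 0, ν ≥ 0, and let μ ∈ L^{qp/(q−p)}([a,b]) be nonnegative. Let F(t,u,v) be measurable in t and satisfy, for every ρ > 0, |F(t,u₁,v₁) − F(t,u₂,v₂)| ≤ c |u₁ − u₂| + (μ(t) + ν ρ^{(q−p)/p}) |v₁ − v₂| whenever |v₁|, |v₂| ≤ ρ (all u₁, u₂ ∈ ℝ). Then for every ρ > 0, all x₁, x₂ ∈ L^p([a,b]) and all y₁, y₂ ∈ L^q([a,b]) with ‖y₁‖_{L^q} ≤ ρ and ‖y₂‖_{L^q} ≤ ρ, the functions t ↦ F(t, x_i(t), y_i(t)) differ by an L^p function and ‖F(·, x₁, y₁) − F(·, x₂, y₂)‖_{L^p} ≤ c ‖x₁ − x₂‖_{L^p} + (‖μ‖_{L^{qp/(q−p)}} + ν ρ^{(q−p)/p}) ‖y₁ − y₂‖_{L^q}. -/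

import Mathlib

open MeasureTheory ENNReal Filter

/-- Variable Lipschitz estimate for the two-argument superposition operator
`F(x,y)(t) = F(t,x(t),y(t))` from `L^p × L^q` to `L^p`:
`‖F(x₁,y₁) - F(x₂,y₂)‖_{L^p} ≤ c ‖x₁ - x₂‖_{L^p} + (‖μ‖_{L^{qp/(q-p)}} + ν ρ^{(q-p)/p}) ‖y₁ - y₂‖_{L^q}`
whenever `‖y₁‖_{L^q}, ‖y₂‖_{L^q} ≤ ρ`. -/
theorem two_argument_superposition_variable_lipschitz
    (a b : ℝ) (hab : a < b) (p q : ℝ) (hp : 1 ≤ p) (hpq : p < q)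
    (c ν : ℝ) (hc : 0 ≤ c) (hν : 0 ≤ ν) (μ : ℝ → ℝ)
    (hμ_nonneg : ∀ t : ℝ, 0 ≤ μ t)
    (hμ_mem : MemLp μ (ENNReal.ofReal (q * p / (q - p)))
      (volume.restrict (Set.Icc a b)))
    (F : ℝ → ℝ → ℝ → ℝ)
    (hF_meas : ∀ u v : ℝ, Measurable (fun t => F t u v))
    (hF_cont : ∀ t : ℝ, Continuous (fun uv : ℝ × ℝ => F t uv.1 uv.2))
    (hF_lip : ∀ ρ : ℝ, 0 < ρ → ∀ t u₁ u₂ v₁ v₂ : ℝ, |v₁| ≤ ρ → |v₂| ≤ ρ →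
      |F t u₁ v₁ - F t u₂ v₂| ≤
        c * |u₁ - u₂| + (μ t + ν * ρ ^ ((q - p) / p)) * |v₁ - v₂|) :
    ∀ ρ : ℝ, 0 < ρ → ∀ x₁ x₂ y₁ y₂ : ℝ → ℝ,
      MemLp x₁ (ENNReal.ofReal p) (volume.restrict (Set.Icc a b)) →
      MemLp x₂ (ENNReal.ofReal p) (volume.restrict (Set.Icc a b)) →
      MemLp y₁ (ENNReal.ofReal q) (volume.restrict (Set.Icc a b)) →
      MemLp y₂ (ENNReal.ofReal q) (volume.restrict (Set.Icc a b)) →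
      eLpNorm y₁ (ENNReal.ofReal q) (volume.restrict (Set.Icc a b)) ≤ ENNReal.ofReal ρ →
      eLpNorm y₂ (ENNReal.ofReal q) (volume.restrict (Set.Icc a b)) ≤ ENNReal.ofReal ρ →
      MemLp (fun t => F t (x₁ t) (y₁ t) - F t (x₂ t) (y₂ t)) (ENNReal.ofReal p)
          (volume.restrict (Set.Icc a b)) ∧
        eLpNorm (fun t => F t (x₁ t) (y₁ t) - F t (x₂ t) (y₂ t)) (ENNReal.ofReal p)
            (volume.restrict (Set.Icc a b)) ≤
          ENNReal.ofReal c *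
              eLpNorm (fun t => x₁ t - x₂ t) (ENNReal.ofReal p)
                (volume.restrict (Set.Icc a b)) +
            ENNReal.ofReal
                ((eLpNorm μ (ENNReal.ofReal (q * p / (q - p)))
                    (volume.restrict (Set.Icc a b))).toReal +
                  ν * ρ ^ ((q - p) / p)) *
              eLpNorm (fun t => y₁ t - y₂ t) (ENNReal.ofReal q)
                (volume.restrict (Set.Icc a b)) := by
  intro ρ hρ x₁ x₂ y₁ y₂ hx₁ hx₂ hy₁ hy₂ hb₁ hb₂
  have hp0 : (0:ℝ) < p := lt_of_lt_of_le one_pos hp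
  have hq0 : (0:ℝ) < q := hp0.trans hpq
  have hqp0 : (0:ℝ) < q - p := sub_pos.mpr hpq
  set M := volume.restrict (Set.Icc a b) with hM
  set r : ℝ := q * p / (q - p) with hrdef
  have hr0 : (0:ℝ) < r := div_pos (mul_pos hq0 hp0) hqp0
  have hr1 : (1:ℝ) ≤ r := by
    rw [hrdef, le_div_iff₀ hqp0]; nlinarith
  set α : ℝ := (q - p) / p with hαdef
  have hα0 : (0:ℝ) < α := div_pos hqp0 hp0
  set P := ENNReal.ofReal p with hPdef
  set Q := ENNReal.ofReal q with hQdef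
  set R := ENNReal.ofReal r with hRdef
  have hP1 : 1 ≤ P := by
    rw [hPdef]; exact ENNReal.one_le_ofReal.mpr hp
  have hQ1 : 1 ≤ Q := by
    rw [hQdef]; exact ENNReal.one_le_ofReal.mpr (hp.trans hpq.le)
  have hR1 : 1 ≤ R := by
    rw [hRdef]; exact ENNReal.one_le_ofReal.mpr hr1
  have hPQR : 1 / P = 1 / R + 1 / Q := by
    rw [hPdef, hQdef, hRdef, one_div, one_div, one_div,
      ← ENNReal.ofReal_inv_of_pos hp0, ← ENNReal.ofReal_inv_of_pos hq0,
      ← ENNReal.ofReal_inv_of_pos hr0,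
      ← ENNReal.ofReal_add (inv_nonneg.mpr hr0.le) (inv_nonneg.mpr hq0.le)]
    congr 1
    rw [hrdef]
    field_simp
    ring
  -- measurability of superposition
  have hFm : Measurable (Function.uncurry fun (uv : ℝ × ℝ) (t : ℝ) => F t uv.1 uv.2) :=
    measurable_uncurry_of_continuous_of_measurable (fun t => hF_cont t)
      (fun uv => hF_meas uv.1 uv.2)
  have hcomp : ∀ (x y : ℝ → ℝ), AEMeasurable x M → AEMeasurable y M →
      AEStronglyMeasurable (fun t => F t (x t) (y t)) M := by
    intro x y hx hy
    exact (hFm.comp_aemeasurable' ((hx.prodMk hy).prodMk aemeasurable_id)).aestronglyMeasurable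
  have hx₁m : AEMeasurable x₁ M := hx₁.1.aemeasurable
  have hx₂m : AEMeasurable x₂ M := hx₂.1.aemeasurable
  have hy₁m : AEMeasurable y₁ M := hy₁.1.aemeasurable
  have hy₂m : AEMeasurable y₂ M := hy₂.1.aemeasurable
  have habs : ∀ f : ℝ → ℝ, AEMeasurable f M → AEMeasurable (fun t => |f t|) M :=
    fun f hf => continuous_abs.measurable.comp_aemeasurable hf
  have hrpw : ∀ f : ℝ → ℝ, AEMeasurable f M → AEMeasurable (fun t => f t ^ α) M :=
    fun f hf => (Real.continuous_rpow_const hα0.le).measurable.comp_aemeasurable hf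
  set Dx := eLpNorm (fun t => x₁ t - x₂ t) P M with hDxdef
  set Dy := eLpNorm (fun t => y₁ t - y₂ t) Q M with hDydef
  set Cμ := eLpNorm μ R M with hCμdef
  have hCμ_ne : Cμ ≠ ∞ := hμ_mem.2.ne
  have hDx_ne : Dx ≠ ∞ := (hx₁.sub hx₂).2.ne
  have hDy_le : Dy ≤ ENNReal.ofReal ρ + ENNReal.ofReal ρ :=
    (eLpNorm_sub_le hy₁.1 hy₂.1 hQ1).trans (add_le_add hb₁ hb₂)
  have hDy_ne : Dy ≠ ∞ :=
    (lt_of_le_of_lt hDy_le (by finiteness)).ne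
  -- Piece A : difference in the first argument
  have hA_pt : ∀ t, |F t (x₁ t) (y₁ t) - F t (x₂ t) (y₁ t)| ≤ c * |x₁ t - x₂ t| := by
    intro t
    have h := hF_lip (|y₁ t| + 1) (by positivity) t (x₁ t) (x₂ t) (y₁ t) (y₁ t)
      (by linarith) (by linarith)
    simpa using h
  have hA : eLpNorm (fun t => F t (x₁ t) (y₁ t) - F t (x₂ t) (y₁ t)) P M ≤
      ENNReal.ofReal c * Dx := by
    have h1 : eLpNorm (fun t => F t (x₁ t) (y₁ t) - F t (x₂ t) (y₁ t)) P M ≤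
        eLpNorm (c • fun t => |x₁ t - x₂ t|) P M := by
      refine eLpNorm_mono_real fun t => ?_
      simpa [Real.norm_eq_abs] using hA_pt t
    rw [eLpNorm_const_smul] at h1
    have h2 : eLpNorm (fun t => |x₁ t - x₂ t|) P M = Dx := by
      rw [hDxdef, ← eLpNorm_norm (fun t => x₁ t - x₂ t)]
      simp [Real.norm_eq_abs]
    rw [h2, Real.enorm_eq_ofReal hc] at h1
    exact h1
  -- Piece B : difference in the second argument, via telescoping
  have hB : ∀ n : ℕ, 0 < n →
      eLpNorm (fun t => F t (x₂ t) (y₁ t) - F t (x₂ t) (y₂ t)) P M ≤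
        (Cμ + ENNReal.ofReal ν * ENNReal.ofReal ((ρ + 2 * ρ / (n:ℝ)) ^ α)) * Dy := by
    intro n hn0
    have hnR : (0:ℝ) < (n:ℝ) := by exact_mod_cast hn0
    set z : ℕ → ℝ → ℝ := fun k t => y₂ t + ((k:ℝ) / n) * (y₁ t - y₂ t) with hzdef
    have hz0 : ∀ t, z 0 t = y₂ t := by intro t; simp [hzdef]
    have hzn : ∀ t, z n t = y₁ t := by
      intro t; rw [hzdef]; field_simp; ring
    have hzmeas : ∀ k, AEMeasurable (z k) M := by
      intro k
      exact hy₂m.add ((hy₁m.sub hy₂m).const_mul _)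
    have hzstep : ∀ k t, z (k + 1) t - z k t = (1 / (n:ℝ)) * (y₁ t - y₂ t) := by
      intro k t
      rw [hzdef]
      push_cast
      field_simp
      ring
    have hznorm : ∀ k, k ≤ n → eLpNorm (z k) Q M ≤ ENNReal.ofReal ρ := by
      intro k hk
      set θ : ℝ := (k:ℝ) / n with hθdef
      have hθ0 : 0 ≤ θ := by positivity
      have hθ1 : θ ≤ 1 := by
        rw [hθdef, div_le_one hnR]; exact_mod_cast hk
      have hze : z k = (1 - θ) • y₂ + θ • y₁ := by
        funext t; simp only [hzdef, Pi.add_apply, Pi.smul_apply, smul_eq_mul]; ring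
      calc eLpNorm (z k) Q M
          = eLpNorm ((1 - θ) • y₂ + θ • y₁) Q M := by rw [hze]
        _ ≤ eLpNorm ((1 - θ) • y₂) Q M + eLpNorm (θ • y₁) Q M :=
            eLpNorm_add_le (hy₂.1.const_smul _) (hy₁.1.const_smul _) hQ1
        _ = ‖1 - θ‖ₑ * eLpNorm y₂ Q M + ‖θ‖ₑ * eLpNorm y₁ Q M := by
            rw [eLpNorm_const_smul, eLpNorm_const_smul]
        _ ≤ ENNReal.ofReal (1 - θ) * ENNReal.ofReal ρ + ENNReal.ofReal θ * ENNReal.ofReal ρ := by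
            rw [Real.enorm_eq_ofReal (by linarith), Real.enorm_eq_ofReal hθ0]
            exact add_le_add (mul_le_mul_right hb₂ _) (mul_le_mul_right hb₁ _)
        _ = ENNReal.ofReal ρ := by
            rw [← ENNReal.ofReal_mul (by linarith), ← ENNReal.ofReal_mul hθ0,
              ← ENNReal.ofReal_add (by nlinarith) (by positivity)]
            congr 1
            ring
    set w : ℕ → ℝ → ℝ := fun k t => max |z k t| |z (k + 1) t| with hwdef
    have hw0 : ∀ k t, 0 ≤ w k t := fun k t => le_max_of_le_left (abs_nonneg _)
    have hwmeas : ∀ k, AEMeasurable (w k) M := fun k =>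
      (habs _ (hzmeas k)).max (habs _ (hzmeas (k + 1)))
    have hstep_pt : ∀ k t, |F t (x₂ t) (z (k + 1) t) - F t (x₂ t) (z k t)| ≤
        (μ t + ν * (w k t) ^ α) * |z (k + 1) t - z k t| := by
      intro k t
      rcases lt_or_eq_of_le (hw0 k t) with hw | hw
      · have h := hF_lip (w k t) hw t (x₂ t) (x₂ t) (z (k + 1) t) (z k t)
          (le_max_right _ _) (le_max_left _ _)
        simpa using h
      · have h1 : z k t = 0 := by
          have h : |z k t| ≤ w k t := le_max_left _ _
          rw [← hw] at h
          exact abs_eq_zero.mp (le_antisymm h (abs_nonneg _))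
        have h2 : z (k + 1) t = 0 := by
          have h : |z (k + 1) t| ≤ w k t := le_max_right _ _
          rw [← hw] at h
          exact abs_eq_zero.mp (le_antisymm h (abs_nonneg _))
        simp [h1, h2]
    have hwnorm : ∀ k, k < n → eLpNorm (w k) Q M ≤ ENNReal.ofReal (ρ + 2 * ρ / (n:ℝ)) := by
      intro k hk
      have hpt : ∀ t, ‖w k t‖ ≤
          ((fun t => |z k t|) + (1 / (n:ℝ)) • fun t => |y₁ t - y₂ t|) t := by
        intro t
        simp only [Pi.add_apply, Pi.smul_apply, smul_eq_mul]
        rw [Real.norm_eq_abs, abs_of_nonneg (hw0 k t)]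
        apply max_le
        · have : (0:ℝ) ≤ 1 / (n:ℝ) * |y₁ t - y₂ t| := by positivity
          linarith
        · have he : z (k + 1) t = z k t + (1 / (n:ℝ)) * (y₁ t - y₂ t) := by
            have := hzstep k t; linarith
          calc |z (k + 1) t| ≤ |z k t| + |(1 / (n:ℝ)) * (y₁ t - y₂ t)| := by
                rw [he]; exact abs_add_le _ _
            _ = |z k t| + 1 / (n:ℝ) * |y₁ t - y₂ t| := by
                rw [abs_mul, abs_of_nonneg (by positivity : (0:ℝ) ≤ 1 / (n:ℝ))]
      calc eLpNorm (w k) Q M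
          ≤ eLpNorm ((fun t => |z k t|) + (1 / (n:ℝ)) • fun t => |y₁ t - y₂ t|) Q M :=
            eLpNorm_mono_real hpt
        _ ≤ eLpNorm (fun t => |z k t|) Q M +
            eLpNorm ((1 / (n:ℝ)) • fun t => |y₁ t - y₂ t|) Q M :=
            eLpNorm_add_le ((habs _ (hzmeas k)).aestronglyMeasurable)
              (((habs _ (hy₁m.sub hy₂m)).aestronglyMeasurable).const_smul _) hQ1
        _ = eLpNorm (z k) Q M + ‖(1 / (n:ℝ))‖ₑ *
            eLpNorm (fun t => |y₁ t - y₂ t|) Q M := by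
            rw [eLpNorm_const_smul]
            congr 1
            rw [← eLpNorm_norm (z k)]
            simp [Real.norm_eq_abs]
        _ = eLpNorm (z k) Q M + ENNReal.ofReal (1 / (n:ℝ)) * Dy := by
            rw [Real.enorm_eq_ofReal (by positivity)]
            congr 1
            rw [hDydef, ← eLpNorm_norm (fun t => y₁ t - y₂ t)]
            simp [Real.norm_eq_abs]
        _ ≤ ENNReal.ofReal ρ + ENNReal.ofReal (1 / (n:ℝ)) *
            (ENNReal.ofReal ρ + ENNReal.ofReal ρ) :=
            add_le_add (hznorm k hk.le) (mul_le_mul_right hDy_le _)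
        _ = ENNReal.ofReal (ρ + 2 * ρ / (n:ℝ)) := by
            rw [← ENNReal.ofReal_add hρ.le hρ.le,
              ← ENNReal.ofReal_mul (by positivity : (0:ℝ) ≤ 1 / (n:ℝ)),
              ← ENNReal.ofReal_add hρ.le (by positivity)]
            congr 1
            field_simp
            ring
    have hseg : ∀ k, k < n →
        eLpNorm (fun t => F t (x₂ t) (z (k + 1) t) - F t (x₂ t) (z k t)) P M ≤
          (Cμ + ENNReal.ofReal ν * ENNReal.ofReal ((ρ + 2 * ρ / (n:ℝ)) ^ α)) *
            (ENNReal.ofReal (1 / (n:ℝ)) * Dy) := by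
      intro k hk
      set φ : ℝ → ℝ := fun t => μ t + ν * (w k t) ^ α with hφdef
      have hφsm : AEStronglyMeasurable φ M := by
        refine AEMeasurable.aestronglyMeasurable ?_
        exact hμ_mem.1.aemeasurable.add ((hrpw _ (hwmeas k)).const_mul _)
      have h1 : eLpNorm (fun t => F t (x₂ t) (z (k + 1) t) - F t (x₂ t) (z k t)) P M ≤
          eLpNorm (φ • fun t => |z (k + 1) t - z k t|) P M := by
        refine eLpNorm_mono_real fun t => ?_
        simpa [Pi.smul_apply, smul_eq_mul, Real.norm_eq_abs] using hstep_pt k t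
      have h2 : eLpNorm (φ • fun t => |z (k + 1) t - z k t|) P M ≤
          eLpNorm φ R M * eLpNorm (fun t => |z (k + 1) t - z k t|) Q M :=
        eLpNorm_smul_le_mul_eLpNorm
          ((habs _ ((hzmeas (k + 1)).sub (hzmeas k))).aestronglyMeasurable) hφsm (hpqr := ⟨by simpa only [one_div] using hPQR.symm⟩)
      have h3 : eLpNorm (fun t => |z (k + 1) t - z k t|) Q M =
          ENNReal.ofReal (1 / (n:ℝ)) * Dy := by
        have e1 : (fun t => |z (k + 1) t - z k t|) =
            fun t => ‖((1 / (n:ℝ)) • fun s => y₁ s - y₂ s) t‖ := by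
          funext t
          rw [hzstep k t]
          simp only [Real.norm_eq_abs, Pi.smul_apply, smul_eq_mul, abs_mul]
        rw [e1, eLpNorm_norm, eLpNorm_const_smul,
          Real.enorm_eq_ofReal (by positivity : (0:ℝ) ≤ 1 / (n:ℝ)), hDydef]
      have e2 : (fun t => (w k t) ^ α) = fun t => ‖w k t‖ ^ α := by
        funext t; rw [Real.norm_eq_abs, abs_of_nonneg (hw0 k t)]
      have e4 : R * ENNReal.ofReal α = Q := by
        rw [hRdef, hQdef, ← ENNReal.ofReal_mul hr0.le]
        congr 1
        rw [hrdef, hαdef]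
        field_simp
      have h5 : eLpNorm (fun t => (w k t) ^ α) R M ≤
          ENNReal.ofReal ((ρ + 2 * ρ / (n:ℝ)) ^ α) := by
        rw [e2, eLpNorm_norm_rpow (w k) hα0, e4]
        calc eLpNorm (w k) Q M ^ α
            ≤ (ENNReal.ofReal (ρ + 2 * ρ / (n:ℝ))) ^ α :=
              ENNReal.rpow_le_rpow (hwnorm k hk) hα0.le
          _ = ENNReal.ofReal ((ρ + 2 * ρ / (n:ℝ)) ^ α) := by
              rw [← ENNReal.ofReal_rpow_of_nonneg (by positivity) hα0.le]
      have h4 : eLpNorm φ R M ≤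
          Cμ + ENNReal.ofReal ν * ENNReal.ofReal ((ρ + 2 * ρ / (n:ℝ)) ^ α) := by
        have he : φ = μ + (ν • fun t => (w k t) ^ α) := by
          funext t; simp [hφdef]
        have hwasm : AEStronglyMeasurable (fun t => (w k t) ^ α) M :=
          (hrpw _ (hwmeas k)).aestronglyMeasurable
        calc eLpNorm φ R M
            ≤ eLpNorm μ R M + eLpNorm (ν • fun t => (w k t) ^ α) R M := by
              rw [he]
              exact eLpNorm_add_le hμ_mem.1 (hwasm.const_smul _) hR1
          _ = Cμ + ‖ν‖ₑ * eLpNorm (fun t => (w k t) ^ α) R M := by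
              rw [eLpNorm_const_smul, hCμdef]
          _ ≤ Cμ + ENNReal.ofReal ν * ENNReal.ofReal ((ρ + 2 * ρ / (n:ℝ)) ^ α) := by
              rw [Real.enorm_eq_ofReal hν]
              exact add_le_add_right (mul_le_mul_right h5 _) _
      refine h1.trans (h2.trans ?_)
      rw [h3]
      exact mul_le_mul_left h4 _
    have htel : (fun t => F t (x₂ t) (y₁ t) - F t (x₂ t) (y₂ t)) =
        ∑ k ∈ Finset.range n, fun t => F t (x₂ t) (z (k + 1) t) - F t (x₂ t) (z k t) := by
      funext t
      rw [Finset.sum_apply]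
      rw [Finset.sum_range_sub (fun k => F t (x₂ t) (z k t))]
      rw [hzn t, hz0 t]
    have hmulinv : (n:ℝ≥0∞) * ((n:ℝ≥0∞))⁻¹ = 1 :=
      ENNReal.mul_inv_cancel (by exact_mod_cast hn0.ne') (by simp)
    have hinv : ENNReal.ofReal (1 / (n:ℝ)) = ((n:ℝ≥0∞))⁻¹ := by
      rw [one_div, ENNReal.ofReal_inv_of_pos hnR, ENNReal.ofReal_natCast]
    calc eLpNorm (fun t => F t (x₂ t) (y₁ t) - F t (x₂ t) (y₂ t)) P M
        = eLpNorm (∑ k ∈ Finset.range n,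
            fun t => F t (x₂ t) (z (k + 1) t) - F t (x₂ t) (z k t)) P M := by rw [htel]
      _ ≤ ∑ k ∈ Finset.range n,
          eLpNorm (fun t => F t (x₂ t) (z (k + 1) t) - F t (x₂ t) (z k t)) P M :=
          eLpNorm_sum_le (fun k _ =>
            (hcomp x₂ (z (k + 1)) hx₂m (hzmeas _)).sub (hcomp x₂ (z k) hx₂m (hzmeas _))) hP1
      _ ≤ ∑ k ∈ Finset.range n,
          (Cμ + ENNReal.ofReal ν * ENNReal.ofReal ((ρ + 2 * ρ / (n:ℝ)) ^ α)) *
            (ENNReal.ofReal (1 / (n:ℝ)) * Dy) :=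
          Finset.sum_le_sum fun k hk => hseg k (Finset.mem_range.mp hk)
      _ = (n:ℝ≥0∞) *
          ((Cμ + ENNReal.ofReal ν * ENNReal.ofReal ((ρ + 2 * ρ / (n:ℝ)) ^ α)) *
            (ENNReal.ofReal (1 / (n:ℝ)) * Dy)) := by
          rw [Finset.sum_const, Finset.card_range, nsmul_eq_mul]
      _ = (Cμ + ENNReal.ofReal ν * ENNReal.ofReal ((ρ + 2 * ρ / (n:ℝ)) ^ α)) * Dy := by
          rw [hinv]
          calc (n:ℝ≥0∞) *
              ((Cμ + ENNReal.ofReal ν * ENNReal.ofReal ((ρ + 2 * ρ / (n:ℝ)) ^ α)) *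
                (((n:ℝ≥0∞))⁻¹ * Dy))
              = ((n:ℝ≥0∞) * ((n:ℝ≥0∞))⁻¹) *
                ((Cμ + ENNReal.ofReal ν * ENNReal.ofReal ((ρ + 2 * ρ / (n:ℝ)) ^ α)) * Dy) := by
                ring
            _ = (Cμ + ENNReal.ofReal ν * ENNReal.ofReal ((ρ + 2 * ρ / (n:ℝ)) ^ α)) * Dy := by
                rw [hmulinv, one_mul]
  -- combine the two pieces
  have hG : ∀ n : ℕ, 0 < n →
      eLpNorm (fun t => F t (x₁ t) (y₁ t) - F t (x₂ t) (y₂ t)) P M ≤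
        ENNReal.ofReal c * Dx +
          (Cμ + ENNReal.ofReal ν * ENNReal.ofReal ((ρ + 2 * ρ / (n:ℝ)) ^ α)) * Dy := by
    intro n hn
    have hsplit : (fun t => F t (x₁ t) (y₁ t) - F t (x₂ t) (y₂ t)) =
        (fun t => F t (x₁ t) (y₁ t) - F t (x₂ t) (y₁ t)) +
          fun t => F t (x₂ t) (y₁ t) - F t (x₂ t) (y₂ t) := by
      funext t
      simp only [Pi.add_apply]
      ring
    rw [hsplit]
    exact (eLpNorm_add_le
      ((hcomp x₁ y₁ hx₁m hy₁m).sub (hcomp x₂ y₁ hx₂m hy₁m))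
      ((hcomp x₂ y₁ hx₂m hy₁m).sub (hcomp x₂ y₂ hx₂m hy₂m)) hP1).trans
      (add_le_add hA (hB n hn))
  -- pass to the limit n → ∞
  have hlim : Filter.Tendsto (fun n : ℕ => ENNReal.ofReal c * Dx +
      (Cμ + ENNReal.ofReal ν * ENNReal.ofReal ((ρ + 2 * ρ / (n:ℝ)) ^ α)) * Dy) Filter.atTop
      (nhds (ENNReal.ofReal c * Dx +
        (Cμ + ENNReal.ofReal ν * ENNReal.ofReal (ρ ^ α)) * Dy)) := by
    have t1 : Filter.Tendsto (fun n : ℕ => ρ + 2 * ρ / (n:ℝ)) Filter.atTop (nhds ρ) := by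
      have h := tendsto_const_div_atTop_nhds_zero_nat (2 * ρ)
      simpa [mul_div_assoc] using tendsto_const_nhds.add h
    have t2 : Filter.Tendsto (fun n : ℕ => (ρ + 2 * ρ / (n:ℝ)) ^ α) Filter.atTop
        (nhds (ρ ^ α)) := t1.rpow_const (Or.inr hα0.le)
    have t3 : Filter.Tendsto (fun n : ℕ => ENNReal.ofReal ((ρ + 2 * ρ / (n:ℝ)) ^ α))
        Filter.atTop (nhds (ENNReal.ofReal (ρ ^ α))) :=
      (ENNReal.continuous_ofReal.tendsto _).comp t2
    have t4 : Filter.Tendsto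
        (fun n : ℕ => Cμ + ENNReal.ofReal ν * ENNReal.ofReal ((ρ + 2 * ρ / (n:ℝ)) ^ α))
        Filter.atTop (nhds (Cμ + ENNReal.ofReal ν * ENNReal.ofReal (ρ ^ α))) :=
      Filter.Tendsto.const_add Cμ
        (ENNReal.Tendsto.const_mul t3 (Or.inr ENNReal.ofReal_ne_top))
    have t5 : Filter.Tendsto
        (fun n : ℕ => (Cμ + ENNReal.ofReal ν * ENNReal.ofReal ((ρ + 2 * ρ / (n:ℝ)) ^ α)) * Dy)
        Filter.atTop (nhds ((Cμ + ENNReal.ofReal ν * ENNReal.ofReal (ρ ^ α)) * Dy)) :=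
      ENNReal.Tendsto.mul_const t4 (Or.inr hDy_ne)
    exact Filter.Tendsto.const_add _ t5
  have hfinal : eLpNorm (fun t => F t (x₁ t) (y₁ t) - F t (x₂ t) (y₂ t)) P M ≤
      ENNReal.ofReal c * Dx +
        (Cμ + ENNReal.ofReal ν * ENNReal.ofReal (ρ ^ α)) * Dy :=
    ge_of_tendsto hlim (Filter.eventually_atTop.mpr ⟨1, fun n hn => hG n hn⟩)
  have hconst : ENNReal.ofReal (Cμ.toReal + ν * ρ ^ α) =
      Cμ + ENNReal.ofReal ν * ENNReal.ofReal (ρ ^ α) := by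
    rw [ENNReal.ofReal_add ENNReal.toReal_nonneg (by positivity),
      ENNReal.ofReal_toReal hCμ_ne, ENNReal.ofReal_mul hν]
  constructor
  · refine ⟨(hcomp x₁ y₁ hx₁m hy₁m).sub (hcomp x₂ y₂ hx₂m hy₂m), ?_⟩
    refine lt_of_le_of_lt hfinal ?_
    refine ENNReal.add_lt_top.mpr ⟨?_, ?_⟩
    · exact ENNReal.mul_lt_top ENNReal.ofReal_lt_top hDx_ne.lt_top
    · exact ENNReal.mul_lt_top
        (ENNReal.add_lt_top.mpr ⟨hCμ_ne.lt_top,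
          ENNReal.mul_lt_top ENNReal.ofReal_lt_top ENNReal.ofReal_lt_top⟩) hDy_ne.lt_top
  · rw [hconst]
    exact hfinal
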